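/- In ℚ(x₀,x₁,x₂,x₃,x₄)[[X]], the product ∏_{S ⊆ {1,2,3,4}} (1 - x₀ (∏_{i∈S} x_i) X) is a polynomial of degree 16 in X whose coefficients f_k (as elements of ℚ[x₀,x₁,x₂,x₃,x₄]) satisfy the functional equation f_{16-k} = f_k · (x₀² x₁x₂x₃x₄)^{8-k} for all 0 ≤ k ≤ 16. -/

import Mathlib

open Finset

/-- The spherical image of the genus-4 denominator:
`∏_{S ⊆ {1,2,3,4}} (1 - x₀ (∏_{i∈S} x_i) X)` over `ℚ[x₀,x₁,x₂,x₃,x₄]`. -/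
noncomputable def sphericalF4 : Polynomial (MvPolynomial (Fin 5) ℚ) :=
  ∏ S : Finset (Fin 4),
    (1 - Polynomial.C (MvPolynomial.X 0 * ∏ i ∈ S, MvPolynomial.X (i.succ)) * Polynomial.X)

section Aux

variable {R : Type*} [CommRing R] [IsDomain R]

open Polynomial

lemma aux_natDegree_one_sub (a : R) (ha : a ≠ 0) :
    (1 - C a * X : R[X]).natDegree = 1 := by
  rw [show (1 - C a * X : R[X]) = C (-a) * X + C 1 by simp [map_neg]; ring]
  exact natDegree_linear (neg_ne_zero.2 ha)

lemma aux_reverse_one_sub (a : R) (ha : a ≠ 0) :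
    (1 - C a * X : R[X]).reverse = X - C a := by
  have h1 := aux_natDegree_one_sub a ha
  ext n
  rw [coeff_reverse, h1]
  match n with
  | 0 => simp [revAt_le, coeff_one]
  | 1 => simp [revAt_le, coeff_one]
  | (n+2) =>
      rw [revAt_eq_self_of_lt (by omega)]
      simp [coeff_one, coeff_X, coeff_C]

lemma aux_reverse_prod {ι : Type*} (s : Finset ι) (f : ι → R[X]) :
    (∏ i ∈ s, f i).reverse = ∏ i ∈ s, (f i).reverse := by
  induction s using Finset.cons_induction with
  | empty => simp [show ((1 : R[X])).reverse = 1 by simpa using reverse_C (1 : R)]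
  | cons i s hi ih => rw [Finset.prod_cons, Finset.prod_cons, reverse_mul_of_domain, ih]

lemma aux_coeff_comp_C_mul_X (p : R[X]) (u : R) (k : ℕ) :
    (p.comp (C u * X)).coeff k = p.coeff k * u ^ k := by
  rw [comp, eval₂_eq_sum, Polynomial.sum, finset_sum_coeff]
  have h : ∀ e ∈ p.support,
      (C (p.coeff e) * (C u * X) ^ e).coeff k = if k = e then p.coeff k * u ^ k else 0 := by
    intro e _
    rw [mul_pow, ← C_pow, ← mul_assoc, ← C_mul, coeff_C_mul_X_pow]
    split_ifs with h
    · subst h; rfl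
    · rfl
  rw [Finset.sum_congr rfl h, Finset.sum_ite_eq p.support k (fun _ => p.coeff k * u ^ k)]
  split_ifs with h
  · rfl
  · rw [notMem_support_iff.1 h, zero_mul]

end Aux

/-- The genus-4 denominator image is a degree-16 polynomial in `X` whose coefficients
satisfy the functional equation `f_{16-k} = f_k · (x₀²x₁x₂x₃x₄)^{8-k}`, stated in the
division-free form `f_{16-k}·u^k = f_k·u^8` with `u = x₀²x₁x₂x₃x₄`. -/
theorem sphericalF4_functional_equation :
    sphericalF4.natDegree = 16 ∧
    ∀ k ≤ 16,
      sphericalF4.coeff (16 - k) *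
          (MvPolynomial.X 0 ^ 2 * ∏ i : Fin 4, MvPolynomial.X (i.succ)) ^ k =
        sphericalF4.coeff k *
          (MvPolynomial.X 0 ^ 2 * ∏ i : Fin 4, MvPolynomial.X (i.succ)) ^ 8 := by
  classical
  set R := MvPolynomial (Fin 5) ℚ
  set a : Finset (Fin 4) → R := fun S => MvPolynomial.X 0 * ∏ i ∈ S, MvPolynomial.X (i.succ)
    with ha_def
  set u : R := MvPolynomial.X 0 ^ 2 * ∏ i : Fin 4, MvPolynomial.X (i.succ) with hu_def
  have hXne : ∀ j : Fin 5, (MvPolynomial.X j : R) ≠ 0 := fun j => MvPolynomial.X_ne_zero j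
  have ha : ∀ S : Finset (Fin 4), a S ≠ 0 := by
    intro S
    exact mul_ne_zero (hXne 0) (Finset.prod_ne_zero_iff.2 fun i _ => hXne i.succ)
  have hmul : ∀ S : Finset (Fin 4), a S * a Sᶜ = u := by
    intro S
    simp only [ha_def, hu_def]
    rw [mul_mul_mul_comm, ← sq, Finset.prod_mul_prod_compl]
  -- product of all roots is u^8
  have hprod : ∏ S : Finset (Fin 4), a S = u ^ 8 := by
    have hsq : (∏ S : Finset (Fin 4), a S) * (∏ S : Finset (Fin 4), a S) =
        (u ^ 8) * (u ^ 8) := by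
      nth_rewrite 2 [← Equiv.prod_comp (Function.Involutive.toPerm _ (compl_involutive (α := Finset (Fin 4)))) a]
      rw [← Finset.prod_mul_distrib]
      simp only [Function.Involutive.coe_toPerm]
      rw [Finset.prod_congr rfl fun S _ => hmul S, Finset.prod_const]
      rw [Finset.card_univ, Fintype.card_finset, Fintype.card_fin, ← pow_add]
      norm_num
    rcases mul_self_eq_mul_self_iff.1 hsq with h | h
    · exact h
    · exfalso
      have h1 := congrArg (MvPolynomial.eval (fun _ : Fin 5 => (1 : ℚ))) h
      simp [ha_def, hu_def] at h1
      norm_num at h1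
  set P : Polynomial R := sphericalF4 with hP_def
  have hPfact : P = ∏ S : Finset (Fin 4), (1 - Polynomial.C (a S) * Polynomial.X) := rfl
  have hfac_ne : ∀ S : Finset (Fin 4),
      (1 - Polynomial.C (a S) * Polynomial.X : Polynomial R) ≠ 0 := by
    intro S h
    have h1 := aux_natDegree_one_sub (a S) (ha S)
    rw [h] at h1
    simp at h1
  have hdeg : P.natDegree = 16 := by
    rw [hPfact, Polynomial.natDegree_prod _ _ fun S _ => hfac_ne S]
    rw [Finset.sum_congr rfl fun S _ => aux_natDegree_one_sub (a S) (ha S)]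
    simp [Finset.card_univ, Fintype.card_finset]
  -- reverse of P
  have hrev : P.reverse = ∏ S : Finset (Fin 4), (Polynomial.X - Polynomial.C (a S)) := by
    rw [hPfact, aux_reverse_prod]
    exact Finset.prod_congr rfl fun S _ => aux_reverse_one_sub (a S) (ha S)
  -- key identity
  have key : P.reverse.comp (Polynomial.C u * Polynomial.X) = Polynomial.C (u ^ 8) * P := by
    rw [hrev, Polynomial.prod_comp]
    have step : ∀ S : Finset (Fin 4),
        (Polynomial.X - Polynomial.C (a S)).comp (Polynomial.C u * Polynomial.X) =
          Polynomial.C (a S) * (Polynomial.C (a Sᶜ) * Polynomial.X - 1) := by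
      intro S
      rw [Polynomial.sub_comp, Polynomial.X_comp, Polynomial.C_comp]
      rw [mul_sub, mul_one, ← mul_assoc, ← Polynomial.C_mul, hmul S]
    rw [Finset.prod_congr rfl fun S _ => step S, Finset.prod_mul_distrib]
    refine congrArg₂ (· * ·) ?_ ?_
    · rw [← map_prod, hprod]
    · have hre : ∏ S : Finset (Fin 4), (Polynomial.C (a Sᶜ) * Polynomial.X - 1) =
          ∏ S : Finset (Fin 4), (Polynomial.C (a S) * Polynomial.X - 1) :=
        Fintype.prod_equiv (Function.Involutive.toPerm _ (compl_involutive (α := Finset (Fin 4)))) _ _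
          (fun S => by simp [Function.Involutive.coe_toPerm])
      rw [hre,
        Finset.prod_congr rfl (fun S _ =>
          show Polynomial.C (a S) * Polynomial.X - 1 =
            (-1) * (1 - Polynomial.C (a S) * Polynomial.X) by ring),
        Finset.prod_mul_distrib, Finset.prod_const, Finset.card_univ, Fintype.card_finset,
        Fintype.card_fin]
      norm_num [hPfact]
  refine ⟨hdeg, fun k hk => ?_⟩
  have hc := congrArg (fun p => Polynomial.coeff p k) key
  simp only [aux_coeff_comp_C_mul_X, Polynomial.coeff_C_mul, Polynomial.coeff_reverse,
    hdeg, Polynomial.revAt_le hk] at hc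
  rw [hc]; ring
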